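/- Let (F, ∂) be a differential subfield of a monster model of DCF₀ such that (F, ∂) is PAC as a differential field. Then the underlying field F is a PAC field: every regular pure-field extension E of F admits a differential structure making it a regular differential extension of (F, ∂), so F is existentially closed in E as a field. -/

import Mathlib

open MvPolynomial

namespace PaperDiff

/-- `F` is existentially closed in the differential extension `(E, D)` in the language of
differential rings: any finite system of differential polynomial equations and an
inequation over `F` with a solution in `E` has a solution in `F`. Differential
polynomials in `n` differential variables of order `< m` are encoded as ordinary
polynomials in the variables `(i, j) ↦ D^[j] (x i)`. -/
def DiffEC (F : Type) [Field F] (dF : Derivation ℤ F F)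
    (E : Type) [Field E] [Algebra F E] (D : Derivation ℤ E E) : Prop :=
  ∀ (n m : ℕ) (S : Finset (MvPolynomial (Fin n × Fin m) F))
    (q : MvPolynomial (Fin n × Fin m) F),
    (∃ e : Fin n → E,
      (∀ p ∈ S, aeval (fun ij : Fin n × Fin m => (fun x => D x)^[ij.2] (e ij.1)) p = 0) ∧
      aeval (fun ij : Fin n × Fin m => (fun x => D x)^[ij.2] (e ij.1)) q ≠ 0) →
    ∃ e : Fin n → F,
      (∀ p ∈ S, aeval (fun ij : Fin n × Fin m => (fun x => dF x)^[ij.2] (e ij.1)) p = 0) ∧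
      aeval (fun ij : Fin n × Fin m => (fun x => dF x)^[ij.2] (e ij.1)) q ≠ 0

/-- `F` is existentially closed in the field extension `E` in the language of rings. -/
def FieldEC (F : Type) [Field F] (E : Type) [Field E] [Algebra F E] : Prop :=
  ∀ (n : ℕ) (S : Finset (MvPolynomial (Fin n) F)) (q : MvPolynomial (Fin n) F),
    (∃ e : Fin n → E, (∀ p ∈ S, aeval e p = 0) ∧ aeval e q ≠ 0) →
    ∃ e : Fin n → F, (∀ p ∈ S, aeval e p = 0) ∧ aeval e q ≠ 0

end PaperDiff

section DerivationExtension

open Polynomial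

section Phi

variable {K E : Type} [Field K] [Field E] [Algebra K E]
  (d : Derivation ℤ K E) (x : E)

noncomputable def phi0 (p : K[X]) : E :=
  PolynomialModule.eval x (PolynomialModule.map E (LinearMap.id : E →ₗ[K] E)
    (d.mapCoeffs p))

lemma phi0_add (p q : K[X]) : phi0 d x (p + q) = phi0 d x p + phi0 d x q := by
  simp [phi0]

lemma phi0_C (a : K) : phi0 d x (C a) = d a := by
  simp [phi0]

lemma phi0_mul (p q : K[X]) :
    phi0 d x (p * q) = aeval x p * phi0 d x q + aeval x q * phi0 d x p := by
  unfold phi0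
  rw [Derivation.leibniz]
  simp only [map_add, PolynomialModule.map_smul, PolynomialModule.eval_smul]
  simp [Polynomial.eval_map, smul_eq_mul, ← Polynomial.aeval_def]

end Phi

section Phi2

variable {K E : Type} [Field K] [CharZero K] [Field E] [Algebra K E]
  (d : Derivation ℤ K E) (x : E)

open Classical in
noncomputable def dxval : E :=
  if h : IsAlgebraic K x then
    - phi0 d x (minpoly K x) / aeval x (derivative (minpoly K x)) else 0

noncomputable def phi (p : K[X]) : E :=
  phi0 d x p + aeval x (derivative p) * dxval d x

lemma phi_add (p q : K[X]) : phi d x (p + q) = phi d x p + phi d x q := by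
  simp only [phi, phi0_add, derivative_add, map_add]; ring

lemma phi_C (a : K) : phi d x (C a) = d a := by
  simp [phi, phi0_C]

lemma phi_mul (p q : K[X]) :
    phi d x (p * q) = aeval x p * phi d x q + aeval x q * phi d x p := by
  simp only [phi, phi0_mul, derivative_mul, map_add, map_mul]; ring

lemma phi_zero : phi d x 0 = 0 := by
  simpa using phi_C d x 0

lemma phi_one : phi d x 1 = 0 := by
  simpa using phi_C d x 1

lemma deriv_minpoly_ne_zero (h : IsAlgebraic K x) :
    aeval x (derivative (minpoly K x)) ≠ 0 :=
  ((minpoly.irreducible h.isIntegral).separable).aeval_derivative_ne_zero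
    (minpoly.aeval K x)

lemma phi_ker {p : K[X]} (hp : aeval x p = 0) : phi d x p = 0 := by
  by_cases h : IsAlgebraic K x
  · obtain ⟨u, rfl⟩ := minpoly.dvd K x hp
    have hf : phi d x (minpoly K x) = 0 := by
      have hne := deriv_minpoly_ne_zero x h
      simp only [phi, dxval, dif_pos h]
      field_simp
      ring
    rw [phi_mul, hf, minpoly.aeval]
    ring
  · have : p = 0 := by
      by_contra hne
      exact h ⟨p, hne, hp⟩
    simp [this, phi_zero]

end Phi2

section Adjoin

variable {K E : Type} [Field K] [CharZero K] [Field E] [Algebra K E]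
  (d : Derivation ℤ K E) (x : E)

lemma phi_neg (p : K[X]) : phi d x (-p) = - phi d x p := by
  have h := phi_add d x p (-p)
  simp only [add_neg_cancel, phi_zero] at h
  linear_combination -h

lemma phi_sub (p q : K[X]) : phi d x (p - q) = phi d x p - phi d x q := by
  rw [sub_eq_add_neg, phi_add, phi_neg, sub_eq_add_neg]

noncomputable def Dfun (y : ↥(IntermediateField.adjoin K {x})) : E :=
  let h := (IntermediateField.mem_adjoin_simple_iff K (y : E)).mp y.2
  let r := h.choose
  let s := h.choose_spec.choose
  (phi d x r * aeval x s - aeval x r * phi d x s) / (aeval x s) ^ 2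

lemma Dfun_spec (y : ↥(IntermediateField.adjoin K {x})) (r s : K[X])
    (hs : aeval x s ≠ 0) (hy : (y : E) = aeval x r / aeval x s) :
    Dfun d x y = (phi d x r * aeval x s - aeval x r * phi d x s) / (aeval x s) ^ 2 := by
  unfold Dfun
  set h := (IntermediateField.mem_adjoin_simple_iff K (y : E)).mp y.2
  set r₀ := h.choose
  set s₀ := h.choose_spec.choose
  have hy₀ : (y : E) = aeval x r₀ / aeval x s₀ := h.choose_spec.choose_spec
  by_cases hs₀ : aeval x s₀ = 0
  · -- then y = 0
    have hy0 : (y : E) = 0 := by rw [hy₀, hs₀, div_zero]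
    have hr : aeval x r = 0 := by
      have := hy.symm.trans hy0
      field_simp at this
      simpa using this
    have hphir : phi d x r = 0 := phi_ker d x hr
    simp [hs₀, hphir, hr]
    exact Or.inr hs₀
  · -- cross relation
    have hcross : aeval x r₀ * aeval x s = aeval x r * aeval x s₀ := by
      have := hy₀.symm.trans hy
      field_simp at this
      linear_combination this
    have hker : phi d x (r₀ * s - r * s₀) = 0 := by
      apply phi_ker
      simp [hcross]
    rw [phi_sub, phi_mul, phi_mul] at hker
    rw [div_eq_div_iff (pow_ne_zero 2 hs₀) (pow_ne_zero 2 hs)]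
    linear_combination (aeval x s * aeval x s₀) * hker -
      (phi d x s₀ * aeval x s + phi d x s * aeval x s₀) * hcross

end Adjoin

section Adjoin2

variable {K E : Type} [Field K] [CharZero K] [Field E] [Algebra K E]
  (d : Derivation ℤ K E) (x : E)

lemma exists_rep (y : ↥(IntermediateField.adjoin K {x})) :
    ∃ r s : K[X], aeval x s ≠ 0 ∧ (y : E) = aeval x r / aeval x s := by
  obtain ⟨r, s, hy⟩ := (IntermediateField.mem_adjoin_simple_iff K (y : E)).mp y.2
  by_cases hs : aeval x s = 0
  · exact ⟨0, 1, by simp, by simp [hy, hs]⟩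
  · exact ⟨r, s, hs, hy⟩

lemma Dfun_add (y z : ↥(IntermediateField.adjoin K {x})) :
    Dfun d x (y + z) = Dfun d x y + Dfun d x z := by
  obtain ⟨r₁, s₁, hs₁, hy⟩ := exists_rep x y
  obtain ⟨r₂, s₂, hs₂, hz⟩ := exists_rep x z
  have hrep : ((y + z : _) : E) = aeval x (r₁ * s₂ + r₂ * s₁) / aeval x (s₁ * s₂) := by
    push_cast
    rw [hy, hz]
    field_simp
    simp only [map_add, map_mul]
    ring
  rw [Dfun_spec d x _ _ _ (by simp [hs₁, hs₂]) hrep,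
    Dfun_spec d x y r₁ s₁ hs₁ hy, Dfun_spec d x z r₂ s₂ hs₂ hz]
  simp only [phi_add, phi_mul, map_add, map_mul]
  field_simp
  ring

lemma Dfun_one : Dfun d x 1 = 0 := by
  rw [Dfun_spec d x 1 1 1 (by simp) (by simp)]
  simp [phi_one]

lemma Dfun_mul (y z : ↥(IntermediateField.adjoin K {x})) :
    Dfun d x (y * z) = (y : E) * Dfun d x z + (z : E) * Dfun d x y := by
  obtain ⟨r₁, s₁, hs₁, hy⟩ := exists_rep x y
  obtain ⟨r₂, s₂, hs₂, hz⟩ := exists_rep x z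
  have hrep : ((y * z : _) : E) = aeval x (r₁ * r₂) / aeval x (s₁ * s₂) := by
    push_cast
    rw [hy, hz]
    field_simp
    simp only [map_add, map_mul]
    ring
  rw [Dfun_spec d x _ _ _ (by simp [hs₁, hs₂]) hrep,
    Dfun_spec d x y r₁ s₁ hs₁ hy, Dfun_spec d x z r₂ s₂ hs₂ hz, hy, hz]
  simp only [phi_mul, map_mul]
  field_simp
  ring

lemma Dfun_algebraMap (a : K) :
    Dfun d x (algebraMap K ↥(IntermediateField.adjoin K {x}) a) = d a := by
  have hrep : ((algebraMap K ↥(IntermediateField.adjoin K {x}) a).1 : E)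
      = aeval x (Polynomial.C a) / aeval x (1 : K[X]) := by
    simp
  rw [Dfun_spec d x _ _ _ (by simp) hrep]
  simp [phi_C, phi_one]

noncomputable def adjoinDerivation : Derivation ℤ ↥(IntermediateField.adjoin K {x}) E where
  toLinearMap := (AddMonoidHom.mk' (Dfun d x) (Dfun_add d x)).toIntLinearMap
  map_one_eq_zero' := Dfun_one d x
  leibniz' y z := by
    show Dfun d x (y * z) = y • Dfun d x z + z • Dfun d x y
    rw [Dfun_mul d x y z, Algebra.smul_def, Algebra.smul_def,
      IntermediateField.algebraMap_apply, IntermediateField.algebraMap_apply]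

lemma adjoinDerivation_apply (y : ↥(IntermediateField.adjoin K {x})) :
    adjoinDerivation d x y = Dfun d x y := rfl

end Adjoin2

section Zorn

variable (F E : Type) [Field F] [CharZero F] [Field E] [Algebra F E]
  (dF : Derivation ℤ F F)

structure PD where
  K : IntermediateField F E
  D : Derivation ℤ ↥K E
  compat : ∀ a : F, D (algebraMap F ↥K a) = algebraMap F E (dF a)

variable {F E dF}

instance : LE (PD F E dF) :=
  ⟨fun p q => ∃ h : p.K ≤ q.K, ∀ y : ↥p.K, q.D ⟨y.1, h y.2⟩ = p.D y⟩

lemma PD.le_def {p q : PD F E dF} :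
    p ≤ q ↔ ∃ h : p.K ≤ q.K, ∀ y : ↥p.K, q.D ⟨y.1, h y.2⟩ = p.D y := Iff.rfl

instance : Preorder (PD F E dF) where
  le_refl p := ⟨le_refl _, fun y => rfl⟩
  le_trans p q r := by
    rintro ⟨h₁, e₁⟩ ⟨h₂, e₂⟩
    exact ⟨h₁.trans h₂, fun y => (e₂ ⟨y.1, h₁ y.2⟩).trans (e₁ y)⟩

lemma bot_coe (y : ↥(⊥ : IntermediateField F E)) :
    (y : E) = algebraMap F E (IntermediateField.botEquiv F E y) := by
  obtain ⟨a, ha⟩ := IntermediateField.mem_bot.mp y.2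
  have hy : y = algebraMap F ↥(⊥ : IntermediateField F E) a := by
    apply Subtype.ext
    exact ha.symm
  rw [hy, (IntermediateField.botEquiv F E).commutes a]
  simp [ha.symm]

noncomputable def basePD : PD F E dF where
  K := ⊥
  D := { toLinearMap := (AddMonoidHom.mk'
          (fun y => algebraMap F E (dF (IntermediateField.botEquiv F E y)))
          (fun y z => by simp only [map_add])).toIntLinearMap
         map_one_eq_zero' := by
          show algebraMap F E (dF (IntermediateField.botEquiv F E 1)) = 0
          simp
         leibniz' := fun y z => by
          show algebraMap F E (dF (IntermediateField.botEquiv F E (y * z))) =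
            y • algebraMap F E (dF (IntermediateField.botEquiv F E z)) +
            z • algebraMap F E (dF (IntermediateField.botEquiv F E y))
          rw [Algebra.smul_def, Algebra.smul_def, IntermediateField.algebraMap_apply,
            IntermediateField.algebraMap_apply, bot_coe y, bot_coe z, map_mul,
            Derivation.leibniz, smul_eq_mul, smul_eq_mul]
          simp only [map_add, map_mul] }
  compat a := by
    show algebraMap F E (dF (IntermediateField.botEquiv F E (algebraMap F _ a))) = _
    rw [(IntermediateField.botEquiv F E).commutes a]
    simp

end Zorn

section Chain

variable {F E : Type} [Field F] [CharZero F] [Field E] [Algebra F E] {dF : Derivation ℤ F F}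

variable (c : Set (PD F E dF))

noncomputable def chainK : IntermediateField F E := ⨆ p : c, p.1.K

lemma chainK_directed (hc : IsChain (· ≤ ·) c) :
    Directed (· ≤ ·) (fun p : c => p.1.K) := by
  intro p q
  rcases hc.total p.2 q.2 with h | h
  · exact ⟨q, h.1, le_refl _⟩
  · exact ⟨p, le_refl _, h.1⟩

lemma mem_chainK (hc : IsChain (· ≤ ·) c) (hne : c.Nonempty) {y : E} :
    y ∈ chainK c ↔ ∃ p : c, y ∈ p.1.K := by
  haveI : Nonempty c := hne.to_subtype
  rw [chainK, ← SetLike.mem_coe,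
    IntermediateField.coe_iSup_of_directed (chainK_directed c hc), Set.mem_iUnion]
  simp

open Classical in
noncomputable def chainDfun (y : ↥(chainK c)) : E :=
  if h : ∃ p : c, y.1 ∈ p.1.K then h.choose.1.D ⟨y.1, h.choose_spec⟩ else 0

lemma chainDfun_spec (hc : IsChain (· ≤ ·) c) (p : c) (y : ↥(chainK c)) (hy : y.1 ∈ p.1.K) :
    chainDfun c y = p.1.D ⟨y.1, hy⟩ := by
  have h : ∃ q : c, y.1 ∈ q.1.K := ⟨p, hy⟩
  rw [chainDfun, dif_pos h]
  rcases hc.total h.choose.2 p.2 with hle | hle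
  · exact (hle.2 ⟨y.1, h.choose_spec⟩).symm
  · exact hle.2 ⟨y.1, hy⟩

lemma mem_chain_of_mem (hc : IsChain (· ≤ ·) c) (hne : c.Nonempty) (y : ↥(chainK c)) :
    ∃ p : c, y.1 ∈ p.1.K :=
  (mem_chainK c hc hne).mp y.2

noncomputable def chainPD (hc : IsChain (· ≤ ·) c) (hne : c.Nonempty) : PD F E dF where
  K := chainK c
  D :=
    { toLinearMap := (AddMonoidHom.mk' (chainDfun c) (by
        intro y z
        obtain ⟨p, hp⟩ := mem_chain_of_mem c hc hne y
        obtain ⟨q, hq⟩ := mem_chain_of_mem c hc hne z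
        rcases hc.total p.2 q.2 with hle | hle
        · have hp' : y.1 ∈ q.1.K := hle.1 hp
          rw [chainDfun_spec c hc q (y + z) (add_mem hp' hq),
            chainDfun_spec c hc q y hp', chainDfun_spec c hc q z hq]
          exact map_add q.1.D ⟨y.1, hp'⟩ ⟨z.1, hq⟩
        · have hq' : z.1 ∈ p.1.K := hle.1 hq
          rw [chainDfun_spec c hc p (y + z) (add_mem hp hq'),
            chainDfun_spec c hc p y hp, chainDfun_spec c hc p z hq']
          exact map_add p.1.D ⟨y.1, hp⟩ ⟨z.1, hq'⟩)).toIntLinearMap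
      map_one_eq_zero' := by
        obtain ⟨p, hp⟩ := hne
        show chainDfun c 1 = 0
        rw [chainDfun_spec c hc ⟨p, hp⟩ 1 (one_mem _)]
        have : (⟨(1 : ↥(chainK c)).1, one_mem _⟩ : ↥p.K) = 1 := rfl
        rw [this]
        exact p.D.map_one_eq_zero
      leibniz' := by
        intro y z
        show chainDfun c (y * z) = y • chainDfun c z + z • chainDfun c y
        obtain ⟨p, hp⟩ := mem_chain_of_mem c hc hne y
        obtain ⟨q, hq⟩ := mem_chain_of_mem c hc hne z
        have key : ∀ (r : c) (hy : y.1 ∈ r.1.K) (hz : z.1 ∈ r.1.K),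
            chainDfun c (y * z) = y • chainDfun c z + z • chainDfun c y := by
          intro r hy hz
          rw [chainDfun_spec c hc r (y * z) (mul_mem hy hz),
            chainDfun_spec c hc r y hy, chainDfun_spec c hc r z hz]
          have : (⟨(y * z).1, mul_mem hy hz⟩ : ↥r.1.K) = ⟨y.1, hy⟩ * ⟨z.1, hz⟩ := rfl
          rw [this, Derivation.leibniz]
          rw [Algebra.smul_def, Algebra.smul_def, Algebra.smul_def, Algebra.smul_def,
            IntermediateField.algebraMap_apply, IntermediateField.algebraMap_apply,
            IntermediateField.algebraMap_apply, IntermediateField.algebraMap_apply]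
        rcases hc.total p.2 q.2 with hle | hle
        · exact key q (hle.1 hp) hq
        · exact key p hp (hle.1 hq)
    }
  compat := by
    intro a
    obtain ⟨p, hp⟩ := hne
    show chainDfun c (algebraMap F ↥(chainK c) a) = algebraMap F E (dF a)
    have hmem : (algebraMap F ↥(chainK c) a).1 ∈ p.K := by
      have : (algebraMap F ↥(chainK c) a).1 = algebraMap F E a := by
        simp [IntermediateField.algebraMap_apply]
      rw [this]
      exact p.K.algebraMap_mem a
    rw [chainDfun_spec c hc ⟨p, hp⟩ _ hmem]
    have : (⟨(algebraMap F ↥(chainK c) a).1, hmem⟩ : ↥p.K) = algebraMap F ↥p.K a := by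
      apply Subtype.ext
      simp [IntermediateField.algebraMap_apply]
    rw [this]
    exact p.compat a

lemma le_chainPD (hc : IsChain (· ≤ ·) c) (hne : c.Nonempty) (p : PD F E dF) (hp : p ∈ c) :
    p ≤ chainPD c hc hne := by
  have hK : p.K ≤ chainK c := le_iSup (fun q : c => q.1.K) ⟨p, hp⟩
  refine ⟨hK, fun y => ?_⟩
  show chainDfun c ⟨y.1, hK y.2⟩ = p.D y
  rw [chainDfun_spec c hc ⟨p, hp⟩ ⟨y.1, hK y.2⟩ y.2]

end Chain

section Final

variable {F E : Type} [Field F] [CharZero F] [Field E] [Algebra F E] (dF : Derivation ℤ F F)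


noncomputable def fullDerivation (m : PD F E dF) (hmem : ∀ e : E, e ∈ m.K) :
    Derivation ℤ E E where
  toLinearMap := (AddMonoidHom.mk' (fun e => m.D ⟨e, hmem e⟩) (fun a b => by
    show m.D ⟨a + b, hmem (a + b)⟩ = m.D ⟨a, hmem a⟩ + m.D ⟨b, hmem b⟩
    have h : (⟨a + b, hmem (a + b)⟩ : ↥m.K) = ⟨a, hmem a⟩ + ⟨b, hmem b⟩ := rfl
    rw [h, map_add])).toIntLinearMap
  map_one_eq_zero' := by
    show m.D ⟨1, hmem 1⟩ = 0
    have h : (⟨(1 : E), hmem 1⟩ : ↥m.K) = 1 := rfl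
    rw [h, m.D.map_one_eq_zero]
  leibniz' a b := by
    show m.D ⟨a * b, hmem (a * b)⟩ = a • m.D ⟨b, hmem b⟩ + b • m.D ⟨a, hmem a⟩
    have h : (⟨a * b, hmem (a * b)⟩ : ↥m.K) = ⟨a, hmem a⟩ * ⟨b, hmem b⟩ := rfl
    rw [h, Derivation.leibniz, Algebra.smul_def, Algebra.smul_def,
      IntermediateField.algebraMap_apply, IntermediateField.algebraMap_apply,
      smul_eq_mul, smul_eq_mul]

lemma fullDerivation_compat (m : PD F E dF) (hmem : ∀ e : E, e ∈ m.K) (a : F) :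
    fullDerivation dF m hmem (algebraMap F E a) = algebraMap F E (dF a) := by
  show m.D ⟨algebraMap F E a, _⟩ = algebraMap F E (dF a)
  have h : (⟨algebraMap F E a, hmem _⟩ : ↥m.K) = algebraMap F ↥m.K a := by
    apply Subtype.ext
    simp [IntermediateField.algebraMap_apply]
  rw [h]
  exact m.compat a

theorem exists_derivation_extension :
    ∃ D : Derivation ℤ E E, ∀ a : F, D (algebraMap F E a) = algebraMap F E (dF a) := by
  haveI : CharZero E := charZero_of_injective_algebraMap (algebraMap F E).injective
  obtain ⟨m, hm⟩ := zorn_le (α := PD F E dF) (by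
    intro c hcc
    by_cases hne : c.Nonempty
    · exact ⟨chainPD c hcc hne, fun p hp => le_chainPD c hcc hne p hp⟩
    · refine ⟨basePD, fun p hp => absurd ⟨p, hp⟩ hne⟩)
  -- maximal element is defined on all of E
  have hK : m.K = ⊤ := by
    by_contra h
    have hx : ∃ x : E, x ∉ m.K := by
      by_contra h'
      push_neg at h'
      exact h (IntermediateField.ext fun x => ⟨fun _ => trivial, fun _ => h' x⟩)
    obtain ⟨x, hx⟩ := hx
    haveI : CharZero ↥m.K := charZero_of_injective_algebraMap (algebraMap F ↥m.K).injective
    set K' : IntermediateField F E :=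
      (IntermediateField.adjoin ↥m.K {x}).restrictScalars F with hK'
    have hcarrier : ∀ y : E, y ∈ K' ↔ y ∈ IntermediateField.adjoin ↥m.K {x} :=
      fun y => Iff.rfl
    let D' : Derivation ℤ ↥K' E := adjoinDerivation m.D x
    have hD' : ∀ y : ↥K', D' y = Dfun m.D x ⟨y.1, (hcarrier y.1).mp y.2⟩ := fun y => rfl
    have hcompat : ∀ a : F, D' (algebraMap F ↥K' a) = algebraMap F E (dF a) := by
      intro a
      have h1 : (algebraMap F ↥K' a).1 =
          (algebraMap ↥m.K ↥(IntermediateField.adjoin ↥m.K {x}) (algebraMap F ↥m.K a)).1 := by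
        simp [IntermediateField.algebraMap_apply]
      have h2 : (algebraMap F ↥K' a) =
          (algebraMap ↥m.K ↥(IntermediateField.adjoin ↥m.K {x}) (algebraMap F ↥m.K a)) :=
        Subtype.ext h1
      show D' (algebraMap F ↥K' a) = _
      rw [h2]
      have := Dfun_algebraMap m.D x (algebraMap F ↥m.K a)
      calc D' (algebraMap ↥m.K ↥(IntermediateField.adjoin ↥m.K {x}) (algebraMap F ↥m.K a))
          = Dfun m.D x (algebraMap ↥m.K ↥(IntermediateField.adjoin ↥m.K {x})
            (algebraMap F ↥m.K a)) := rfl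
        _ = m.D (algebraMap F ↥m.K a) := this
        _ = algebraMap F E (dF a) := m.compat a
    have hle : m ≤ PD.mk K' D' hcompat := by
      refine ⟨fun y hy => ?_, fun y => ?_⟩
      · exact (hcarrier y).mpr (IntermediateField.algebraMap_mem _ (⟨y, hy⟩ : ↥m.K))
      · show D' ⟨y.1, _⟩ = m.D y
        have h2 : (⟨y.1, _⟩ : ↥K') =
            algebraMap ↥m.K ↥(IntermediateField.adjoin ↥m.K {x}) y := Subtype.ext rfl
        rw [h2]
        exact Dfun_algebraMap m.D x y
    have hge := hm hle
    have hxK' : x ∈ K' :=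
      (hcarrier x).mpr (IntermediateField.mem_adjoin_simple_self ↥m.K x)
    exact hx (hge.1 hxK')
  -- transport to a derivation on E
  have hmem : ∀ e : E, e ∈ m.K := fun e => hK ▸ IntermediateField.mem_top
  exact ⟨fullDerivation dF m hmem, fullDerivation_compat dF m hmem⟩

end Final

end DerivationExtension

open PaperDiff in
/-- **PAC differential fields have PAC underlying fields.** If the differential field
`(F, ∂)` of characteristic `0` is PAC as a differential field — i.e. existentially closed
(in the language of differential rings) in every differential field extension `(E, D)`
extending `∂` whose underlying field extension is regular — then the underlying field `F`
is a PAC field: `F` is existentially closed (in the language of rings) in every regular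
field extension of `F`. -/
theorem PAC_differential_implies_PAC_field
    (F : Type) [Field F] [CharZero F] (dF : Derivation ℤ F F)
    (hPAC : ∀ (E : Type) [Field E] [Algebra F E] (D : Derivation ℤ E E),
      (∀ x : F, D (algebraMap F E x) = algebraMap F E (dF x)) →
      (∀ x : E, IsAlgebraic F x → ∃ y : F, algebraMap F E y = x) →
      DiffEC F dF E D) :
    ∀ (E : Type) [Field E] [Algebra F E],
      (∀ x : E, IsAlgebraic F x → ∃ y : F, algebraMap F E y = x) →
      FieldEC F E := by
  intro E _ _ hreg n S q ⟨e, he, hq⟩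
  classical
  obtain ⟨D, hD⟩ := exists_derivation_extension (F := F) (E := E) dF
  have hec := hPAC E D hD hreg
  set emb : Fin n → Fin n × Fin 1 := fun i => (i, 0) with hemb
  have key : ∀ (A : Type) [Field A] [Algebra F A] (DA : A → A) (f : Fin n → A)
      (p : MvPolynomial (Fin n) F),
      aeval (fun ij : Fin n × Fin 1 => DA^[ij.2] (f ij.1)) (rename emb p) = aeval f p := by
    intro A _ _ DA f p
    rw [aeval_rename]
    congr 1
  obtain ⟨f, hf, hfq⟩ := hec n 1 (S.image (rename emb)) (rename emb q) ⟨e, by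
    constructor
    · intro p' hp'
      obtain ⟨p, hp, rfl⟩ := Finset.mem_image.mp hp'
      rw [key E (fun x => D x) e p]
      exact he p hp
    · rw [key E (fun x => D x) e q]
      exact hq⟩
  refine ⟨f, fun p hp => ?_, ?_⟩
  · rw [← key F (fun x => dF x) f p]
    exact hf _ (Finset.mem_image_of_mem _ hp)
  · rw [← key F (fun x => dF x) f q]
    exact hfq
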